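/- Soundness of Åqvist's system E: every formula derivable in the proof system E (consisting of all propositional tautologies, the axiom schemata K: □(φ→ψ)→(□φ→□ψ), 4: □φ→□□φ, 5: ¬□φ→□¬□φ, COK: ○(ψ→χ/φ)→(○(ψ/φ)→○(χ/φ)), Id: ○(φ/φ), Sh: ○(χ/φ∧ψ)→○((ψ→χ)/φ), Abs: ○(ψ/φ)→□○(ψ/φ), Nec: □ψ→○(ψ/φ), Ext: □(φ↔ψ)→(○(χ/φ)↔○(χ/ψ)), closed under modus ponens and the necessitation rule: from ⊢φ infer ⊢□φ) is valid in the class of all preference models. -/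
import Mathlib

/-- Formulas of Åqvist's dyadic deontic logic **E**:
`φ ::= p | ¬φ | φ∧φ | □φ | ○(φ/φ)`.
`EForm.ob ψ φ` denotes `○(ψ/φ)` ("ψ is obligatory, given φ"). -/
inductive EForm : Type where
  | atom : ℕ → EForm
  | neg  : EForm → EForm
  | conj : EForm → EForm → EForm
  | box  : EForm → EForm
  | ob   : EForm → EForm → EForm
deriving DecidableEq

/-- Material implication, defined classically. -/
def EForm.impl (φ ψ : EForm) : EForm := .neg (.conj φ (.neg ψ))

/-- Biconditional. -/
def EForm.iff' (φ ψ : EForm) : EForm := .conj (φ.impl ψ) (ψ.impl φ)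

/-- A preference model `M = (W, ≽, V)`: a nonempty set of worlds, a betterness
relation, and a valuation. -/
structure PrefModel where
  W : Type
  ne : Nonempty W
  R : W → W → Prop
  V : ℕ → W → Prop

/-- Satisfaction `M,s ⊨ φ`. In particular
`M,s ⊨ ○(ψ/φ)` iff `opt_≽(‖φ‖) ⊆ ‖ψ‖`, where
`opt_≽(‖φ‖) = {w ∈ ‖φ‖ : ∀ y, (M,y ⊨ φ) → w ≽ y}`. -/
def PrefModel.sat (M : PrefModel) : M.W → EForm → Prop
  | s, .atom n   => M.V n s
  | s, .neg φ    => ¬ PrefModel.sat M s φ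
  | s, .conj φ ψ => PrefModel.sat M s φ ∧ PrefModel.sat M s ψ
  | _, .box φ    => ∀ t, PrefModel.sat M t φ
  | _, .ob ψ φ   => ∀ w, (PrefModel.sat M w φ ∧ ∀ y, PrefModel.sat M y φ → M.R w y) →
                     PrefModel.sat M w ψ

/-- Validity in the class of all preference models. -/
def EValid (φ : EForm) : Prop := ∀ (M : PrefModel) (s : M.W), M.sat s φ

/-- A Boolean evaluation: any assignment of truth values to formulas that
respects negation and conjunction (treating atoms, `□`- and `○`-formulas as
atomic). -/
def BoolEval (v : EForm → Prop) : Prop :=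
  (∀ φ, v (.neg φ) ↔ ¬ v φ) ∧ (∀ φ ψ, v (.conj φ ψ) ↔ (v φ ∧ v ψ))

/-- Propositional (PL) tautologies. -/
def Taut (φ : EForm) : Prop := ∀ v, BoolEval v → v φ

/-- The proof system **E**: all PL tautologies, the axiom schemata
K, 4, 5, COK, Id, Sh, Abs, Nec, Ext, closed under modus ponens and
the necessitation rule. -/
inductive EThm : EForm → Prop where
  | taut {φ} : Taut φ → EThm φ
  | axK (φ ψ) : EThm ((EForm.box (φ.impl ψ)).impl ((EForm.box φ).impl (EForm.box ψ)))
  | ax4 (φ) : EThm ((EForm.box φ).impl (EForm.box (EForm.box φ)))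
  | ax5 (φ) : EThm ((EForm.neg (EForm.box φ)).impl (EForm.box (EForm.neg (EForm.box φ))))
  | cok (φ ψ χ) : EThm ((EForm.ob (ψ.impl χ) φ).impl ((EForm.ob ψ φ).impl (EForm.ob χ φ)))
  | id (φ) : EThm (EForm.ob φ φ)
  | sh (φ ψ χ) : EThm ((EForm.ob χ (EForm.conj φ ψ)).impl (EForm.ob (ψ.impl χ) φ))
  | abs (φ ψ) : EThm ((EForm.ob ψ φ).impl (EForm.box (EForm.ob ψ φ)))
  | necAx (φ ψ) : EThm ((EForm.box ψ).impl (EForm.ob ψ φ))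
  | ext (φ ψ χ) : EThm ((EForm.box (φ.iff' ψ)).impl ((EForm.ob χ φ).iff' (EForm.ob χ ψ)))
  | mp {φ ψ} : EThm (φ.impl ψ) → EThm φ → EThm ψ
  | nec {φ} : EThm φ → EThm (EForm.box φ)

lemma sat_impl (M : PrefModel) (s : M.W) (φ ψ : EForm) :
    M.sat s (φ.impl ψ) ↔ (M.sat s φ → M.sat s ψ) := by
  simp [EForm.impl, PrefModel.sat]

/-- **Soundness of Åqvist's system E**: every formula derivable in the proof
system E is valid in the class of all preference models. -/
theorem E_soundness : ∀ φ : EForm, EThm φ → EValid φ := by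
  intro φ h
  induction h with
  | taut h => intro M s; exact h (M.sat s) ⟨fun _ => Iff.rfl, fun _ _ => Iff.rfl⟩
  | axK φ ψ =>
    intro M s
    rw [sat_impl, sat_impl]
    intro h1 h2 t
    exact (sat_impl M t φ ψ).1 (h1 t) (h2 t)
  | ax4 φ => intro M s; rw [sat_impl]; exact fun h _ => h
  | ax5 φ => intro M s; rw [sat_impl]; exact fun h _ => h
  | cok φ ψ χ =>
    intro M s
    rw [sat_impl, sat_impl]
    intro h1 h2 w hw
    exact (sat_impl M w ψ χ).1 (h1 w hw) (h2 w hw)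
  | id φ => intro M s w hw; exact hw.1
  | sh φ ψ χ =>
    intro M s
    rw [sat_impl]
    intro h w hw
    rw [sat_impl]
    intro hψ
    exact h w ⟨⟨hw.1, hψ⟩, fun y hy => hw.2 y hy.1⟩
  | abs φ ψ => intro M s; rw [sat_impl]; exact fun h _ => h
  | necAx φ ψ => intro M s; rw [sat_impl]; exact fun h w _ => h w
  | ext φ ψ χ =>
    intro M s
    rw [sat_impl]
    intro h
    have hiff : ∀ t : M.W, M.sat t φ ↔ M.sat t ψ := by
      intro t
      have := h t
      simp only [EForm.iff', PrefModel.sat] at this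
      exact ⟨(sat_impl M t φ ψ).1 this.1, (sat_impl M t ψ φ).1 this.2⟩
    constructor
    · rw [sat_impl]
      intro h1 w hw
      exact h1 w ⟨(hiff w).2 hw.1, fun y hy => hw.2 y ((hiff y).1 hy)⟩
    · rw [sat_impl]
      intro h1 w hw
      exact h1 w ⟨(hiff w).1 hw.1, fun y hy => hw.2 y ((hiff y).2 hy)⟩
  | mp _ _ ih1 ih2 => intro M s; exact (sat_impl M s _ _).1 (ih1 M s) (ih2 M s)
  | nec _ ih => intro M s t; exact ih M t
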